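/- Exponent reduction in space. Fix a dimension n ≥ 1, exponents p > 0, α > 0 and β ∈ (α/2, α), and let u : Ω × Q₁ → ℝ be jointly measurable with ‖u‖_{p,α,Q₁} < ∞ almost surely. Suppose there exist constants δ(α) > 0 and Γ(α) ≥ 1 such that for all 0 < r < R ≤ 1, all a > 0 and all Γ > Γ(α), P( ‖u‖_{∞,Q_r} > a and (R−r)^{−(n/α+2/p)}·‖u‖_{p,α,Q_R} ≤ a/Γ ) ≤ exp(−Γ^{δ(α)}/R²). Then there exist constants δ(β) > 0 and Γ(β) ≥ 1, depending only on n, p, α, β, δ(α) and Γ(α), such that for all Γ > Γ(β), all a > 0 and all 0 < r ≤ 1/2, P( ‖u‖_{∞,Q_r} > a and r^{−(n/β+2/p)}·‖u‖_{p,β,Q_{2r}} ≤ a/Γ ) ≤ exp(−Γ^{δ(β)}/(4r²)). -/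

import Mathlib

open MeasureTheory Filter
open scoped ENNReal Topology

set_option maxHeartbeats 2000000

noncomputable section

/-- The parabolic cylinder `Q_r(t₀,x₀) = (t₀ - r², t₀] × B_r(x₀)`, where the ball is
taken with respect to the sup norm on `Fin n → ℝ`. -/
def pCyl (n : ℕ) (r : ℝ) (c : ℝ × (Fin n → ℝ)) : Set (ℝ × (Fin n → ℝ)) :=
  Set.Ioc (c.1 - r ^ 2) c.1 ×ˢ Metric.ball c.2 r

/-- The mixed norm `‖h‖_{p,q,I×B} = (∫_I (∫_B |h(t,x)|^q dx)^{p/q} dt)^{1/p}`,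
valued in `ℝ≥0∞`. -/
def mixedNorm (n : ℕ) (p q : ℝ) (I : Set ℝ) (B : Set (Fin n → ℝ))
    (h : ℝ × (Fin n → ℝ) → ℝ) : ℝ≥0∞ :=
  (∫⁻ t in I, (∫⁻ x in B, ENNReal.ofReal (|h (t, x)| ^ q)) ^ (p / q)) ^ (1 / p)

/-- The essential supremum of `|h|` over `D ⊆ ℝ × ℝⁿ` with respect to Lebesgue
measure, valued in `ℝ≥0∞`. -/
def supNorm (n : ℕ) (D : Set (ℝ × (Fin n → ℝ))) (h : ℝ × (Fin n → ℝ) → ℝ) : ℝ≥0∞ :=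
  essSup (fun z => ENNReal.ofReal |h z|) (volume.restrict D)

lemma mixedNorm_mono_set {n : ℕ} {p q : ℝ} (hp : 0 < p) (hq : 0 < q)
    {I I' : Set ℝ} {B B' : Set (Fin n → ℝ)} (hI : I ⊆ I') (hB : B ⊆ B')
    (h : ℝ × (Fin n → ℝ) → ℝ) :
    mixedNorm n p q I B h ≤ mixedNorm n p q I' B' h := by
  unfold mixedNorm
  refine ENNReal.rpow_le_rpow ?_ (by positivity)
  refine le_trans (lintegral_mono fun t => ?_) (lintegral_mono_set hI)
  exact ENNReal.rpow_le_rpow (lintegral_mono_set hB) (by positivity)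

lemma supNorm_mono_set {n : ℕ} {D D' : Set (ℝ × (Fin n → ℝ))} (hD : D ⊆ D')
    (h : ℝ × (Fin n → ℝ) → ℝ) : supNorm n D h ≤ supNorm n D' h :=
  essSup_mono_measure (Measure.absolutelyContinuous_of_le (Measure.restrict_mono hD le_rfl))

lemma pCyl_mono {n : ℕ} {r r' : ℝ} (h0 : 0 ≤ r) (h : r ≤ r') (c : ℝ × (Fin n → ℝ)) :
    pCyl n r c ⊆ pCyl n r' c := by
  unfold pCyl
  apply Set.prod_mono
  · exact Set.Ioc_subset_Ioc (by nlinarith) le_rfl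
  · exact Metric.ball_subset_ball h

lemma interp {n : ℕ} {p α β : ℝ} (hp : 0 < p) (hβ : 0 < β) (hβα : β < α)
    {v : ℝ × (Fin n → ℝ) → ℝ} (hv : Measurable v) {ρ : ℝ} (hρ : 0 < ρ) :
    mixedNorm n p α (Set.Ioc (1 - ρ ^ 2) 1) (Metric.ball (0 : Fin n → ℝ) ρ) v ≤
      supNorm n (pCyl n ρ (1, 0)) v ^ (1 - β / α) *
        ENNReal.ofReal (ρ ^ 2) ^ ((1 - β / α) / p) *
        mixedNorm n p β (Set.Ioc (1 - ρ ^ 2) 1) (Metric.ball (0 : Fin n → ℝ) ρ) v ^ (β / α) := by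
  have hα : 0 < α := hβ.trans hβα
  set I : Set ℝ := Set.Ioc (1 - ρ ^ 2) 1 with hI
  set B : Set (Fin n → ℝ) := Metric.ball (0 : Fin n → ℝ) ρ with hB
  set S : ℝ≥0∞ := supNorm n (pCyl n ρ (1, 0)) v with hS
  -- a.e. bound by essential sup, sliced
  have hprod : (volume : Measure (ℝ × (Fin n → ℝ))).restrict (I ×ˢ B)
      = (volume.restrict I).prod (volume.restrict B) := by
    rw [Measure.volume_eq_prod, Measure.prod_restrict]
  have hae : ∀ᵐ t ∂(volume.restrict I), ∀ᵐ x ∂(volume.restrict B),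
      ENNReal.ofReal |v (t, x)| ≤ S := by
    have h0 : ∀ᵐ z ∂((volume : Measure (ℝ × (Fin n → ℝ))).restrict (pCyl n ρ (1, 0))),
        ENNReal.ofReal |v z| ≤ S := ENNReal.ae_le_essSup _
    have hps : pCyl n ρ (1, 0) = I ×ˢ B := rfl
    rw [hps, hprod] at h0
    exact Measure.ae_ae_of_ae_prod h0
  -- inner inequality for a.e. t
  have hmeasβ : ∀ t : ℝ, Measurable fun x => ENNReal.ofReal (|v (t, x)| ^ β) := by
    intro t
    exact ((hv.comp measurable_prodMk_left).abs.pow_const β).ennreal_ofReal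
  have key : ∀ᵐ t ∂(volume.restrict I),
      (∫⁻ x in B, ENNReal.ofReal (|v (t, x)| ^ α)) ≤
        S ^ (α - β) * ∫⁻ x in B, ENNReal.ofReal (|v (t, x)| ^ β) := by
    filter_upwards [hae] with t ht
    calc (∫⁻ x in B, ENNReal.ofReal (|v (t, x)| ^ α))
        ≤ ∫⁻ x in B, S ^ (α - β) * ENNReal.ofReal (|v (t, x)| ^ β) := by
          refine lintegral_mono_ae ?_
          filter_upwards [ht] with x hx
          rw [← ENNReal.ofReal_rpow_of_nonneg (abs_nonneg _) hα.le,
            ← ENNReal.ofReal_rpow_of_nonneg (abs_nonneg _) hβ.le]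
          have hsplit : (ENNReal.ofReal |v (t, x)|) ^ α
              = (ENNReal.ofReal |v (t, x)|) ^ (α - β) * (ENNReal.ofReal |v (t, x)|) ^ β := by
            rw [← ENNReal.rpow_add_of_nonneg _ _ (by linarith : (0:ℝ) ≤ α - β) hβ.le,
              sub_add_cancel]
          rw [hsplit]
          exact mul_le_mul_left (ENNReal.rpow_le_rpow hx (by linarith)) _
      _ = S ^ (α - β) * ∫⁻ x in B, ENNReal.ofReal (|v (t, x)| ^ β) :=
          lintegral_const_mul _ (hmeasβ t)
  -- Hölder in time and assembly
  set θ : ℝ := β / α with hθdef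
  have hθ : 0 < θ := by positivity
  have hθ1 : θ < 1 := by
    rw [hθdef, div_lt_one hα]; exact hβα
  have hJ : Measurable fun t : ℝ => ∫⁻ x in B, ENNReal.ofReal (|v (t, x)| ^ β) :=
    Measurable.lintegral_prod_right' (f := fun z => ENNReal.ofReal (|v z| ^ β))
      (hv.abs.pow_const β).ennreal_ofReal
  set F : ℝ → ℝ≥0∞ := fun t => (∫⁻ x in B, ENNReal.ofReal (|v (t, x)| ^ β)) ^ (p / β)
    with hFdef
  have hFmeas : Measurable F := hJ.pow_const _
  have step1 : (∫⁻ t in I, (∫⁻ x in B, ENNReal.ofReal (|v (t, x)| ^ α)) ^ (p / α)) ≤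
      (S ^ (α - β)) ^ (p / α) * ∫⁻ t in I, (F t) ^ θ := by
    calc (∫⁻ t in I, (∫⁻ x in B, ENNReal.ofReal (|v (t, x)| ^ α)) ^ (p / α))
        ≤ ∫⁻ t in I, (S ^ (α - β) * ∫⁻ x in B, ENNReal.ofReal (|v (t, x)| ^ β)) ^ (p / α) :=
          lintegral_mono_ae (key.mono fun t ht => ENNReal.rpow_le_rpow ht (by positivity))
      _ = ∫⁻ t in I, (S ^ (α - β)) ^ (p / α) * (F t) ^ θ := by
          refine lintegral_congr fun t => ?_
          rw [ENNReal.mul_rpow_of_nonneg _ _ (by positivity)]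
          congr 1
          rw [hFdef, ← ENNReal.rpow_mul]
          congr 1
          rw [hθdef]
          field_simp
      _ = (S ^ (α - β)) ^ (p / α) * ∫⁻ t in I, (F t) ^ θ :=
          lintegral_const_mul _ (hFmeas.pow_const _)
  have hvolI : (volume.restrict I) Set.univ = ENNReal.ofReal (ρ ^ 2) := by
    rw [Measure.restrict_apply_univ, hI, Real.volume_Ioc]
    norm_num
  have step2 : (∫⁻ t in I, (F t) ^ θ) ≤
      (∫⁻ t in I, F t) ^ θ * ENNReal.ofReal (ρ ^ 2) ^ (1 - θ) := by
    have hconj : Real.HolderConjugate (1 / θ) (1 / (1 - θ)) := by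
      constructor
      · simp only [one_div, inv_inv, inv_one]; ring
      · positivity
      · have : 0 < 1 - θ := by linarith
        positivity
    have hH := ENNReal.lintegral_mul_le_Lp_mul_Lq (volume.restrict I) hconj
      (f := fun t => (F t) ^ θ) (g := fun _ => 1)
      ((hFmeas.pow_const _).aemeasurable) aemeasurable_const
    simp only [Pi.mul_apply, mul_one] at hH
    calc (∫⁻ t in I, (F t) ^ θ) ≤
        (∫⁻ t in I, ((F t) ^ θ) ^ (1 / θ)) ^ (1 / (1 / θ)) *
          (∫⁻ t in I, (1 : ℝ≥0∞) ^ (1 / (1 - θ))) ^ (1 / (1 / (1 - θ))) := hH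
      _ = (∫⁻ t in I, F t) ^ θ * ENNReal.ofReal (ρ ^ 2) ^ (1 - θ) := by
          rw [one_div_one_div, one_div_one_div]
          have h1 : (∫⁻ t in I, ((F t) ^ θ) ^ (1 / θ)) = ∫⁻ t in I, F t := by
            refine lintegral_congr fun t => ?_
            rw [← ENNReal.rpow_mul, mul_one_div, div_self hθ.ne', ENNReal.rpow_one]
          have h2 : (∫⁻ (_ : ℝ) in I, ((1 : ℝ≥0∞)) ^ (1 / (1 - θ))) = ENNReal.ofReal (ρ ^ 2) := by
            simp only [ENNReal.one_rpow]
            rw [lintegral_one, hvolI]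
          rw [h1, h2]
  calc mixedNorm n p α I B v
      = (∫⁻ t in I, (∫⁻ x in B, ENNReal.ofReal (|v (t, x)| ^ α)) ^ (p / α)) ^ (1 / p) := rfl
    _ ≤ ((S ^ (α - β)) ^ (p / α) *
          ((∫⁻ t in I, F t) ^ θ * ENNReal.ofReal (ρ ^ 2) ^ (1 - θ))) ^ (1 / p) := by
        refine ENNReal.rpow_le_rpow ?_ (by positivity)
        calc (∫⁻ t in I, (∫⁻ x in B, ENNReal.ofReal (|v (t, x)| ^ α)) ^ (p / α))
            ≤ (S ^ (α - β)) ^ (p / α) * ∫⁻ t in I, (F t) ^ θ := step1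
          _ ≤ _ := mul_le_mul_right step2 _
    _ = S ^ (1 - θ) * ENNReal.ofReal (ρ ^ 2) ^ ((1 - θ) / p) * (mixedNorm n p β I B v) ^ θ := by
        rw [ENNReal.mul_rpow_of_nonneg _ _ (by positivity),
            ENNReal.mul_rpow_of_nonneg _ _ (by positivity)]
        have e1 : ((S ^ (α - β)) ^ (p / α)) ^ (1 / p) = S ^ (1 - θ) := by
          rw [← ENNReal.rpow_mul, ← ENNReal.rpow_mul]
          congr 1
          rw [hθdef]
          field_simp
        have e2 : ((∫⁻ t in I, F t) ^ θ) ^ (1 / p) = (mixedNorm n p β I B v) ^ θ := by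
          rw [← ENNReal.rpow_mul, mul_comm θ (1 / p), ENNReal.rpow_mul]
          rfl
        have e3 : (ENNReal.ofReal (ρ ^ 2) ^ (1 - θ)) ^ (1 / p)
            = ENNReal.ofReal (ρ ^ 2) ^ ((1 - θ) / p) := by
          rw [← ENNReal.rpow_mul]
          congr 1
          ring
        rw [e1, e2, e3]
        ring

lemma sup_ne_top {Ω : Type*} [MeasurableSpace Ω] (P : Measure Ω) [IsProbabilityMeasure P]
    (n : ℕ) (p α : ℝ) (hp : 0 < p) (hα : 0 < α)
    (u : Ω → ℝ × (Fin n → ℝ) → ℝ)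
    (hfin : ∀ᵐ ω ∂P,
      mixedNorm n p α (Set.Ioc (0 : ℝ) 1) (Metric.ball (0 : Fin n → ℝ) 1) (u ω) < ⊤)
    (δα Γα : ℝ) (hδα : 0 < δα) (hΓα : 1 ≤ Γα)
    (H : ∀ r R : ℝ, 0 < r → r < R → R ≤ 1 → ∀ a > (0 : ℝ), ∀ Γ > Γα,
      P {ω | supNorm n (pCyl n r (1, 0)) (u ω) > ENNReal.ofReal a ∧
          ENNReal.ofReal ((R - r) ^ (-((n : ℝ) / α + 2 / p))) *
            mixedNorm n p α (Set.Ioc (1 - R ^ 2) 1) (Metric.ball (0 : Fin n → ℝ) R) (u ω)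
            ≤ ENNReal.ofReal (a / Γ)} ≤
        ENNReal.ofReal (Real.exp (-(Γ ^ δα / R ^ 2)))) :
    P {ω | supNorm n (pCyl n (3/4 : ℝ) (1, 0)) (u ω) = ⊤} = 0 := by
  set cα : ℝ := (n : ℝ) / α + 2 / p with hcα
  have hIoc : Set.Ioc ((1 : ℝ) - 1 ^ 2) 1 = Set.Ioc (0 : ℝ) 1 := by norm_num
  set A : ℕ → Set Ω := fun m => {ω | supNorm n (pCyl n (3/4 : ℝ) (1, 0)) (u ω) = ⊤ ∧
      mixedNorm n p α (Set.Ioc (0 : ℝ) 1) (Metric.ball (0 : Fin n → ℝ) 1) (u ω) ≤ (m : ℝ≥0∞)}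
    with hA
  have hAnull : ∀ m : ℕ, P (A m) = 0 := by
    intro m
    have hbound : ∀ j : ℕ, P (A m) ≤ ENNReal.ofReal (Real.exp (-((Γα + 1 + j) ^ δα))) := by
      intro j
      set Γ : ℝ := Γα + 1 + j with hΓ
      have hΓpos : 0 < Γ := by positivity
      set a : ℝ := Γ * ((4 : ℝ) ^ cα * m + 1) with ha
      have hapos : 0 < a := by positivity
      have hsub : A m ⊆ {ω | supNorm n (pCyl n (3/4 : ℝ) (1, 0)) (u ω) > ENNReal.ofReal a ∧
          ENNReal.ofReal (((1 : ℝ) - 3/4) ^ (-cα)) *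
            mixedNorm n p α (Set.Ioc (1 - (1 : ℝ) ^ 2) 1) (Metric.ball (0 : Fin n → ℝ) 1) (u ω)
            ≤ ENNReal.ofReal (a / Γ)} := by
        intro ω hω
        obtain ⟨hsup, hnorm⟩ := hω
        constructor
        · rw [hsup]; exact ENNReal.ofReal_lt_top
        · rw [hIoc]
          calc ENNReal.ofReal (((1 : ℝ) - 3/4) ^ (-cα)) *
                mixedNorm n p α (Set.Ioc (0 : ℝ) 1) (Metric.ball (0 : Fin n → ℝ) 1) (u ω)
              ≤ ENNReal.ofReal (((1 : ℝ) - 3/4) ^ (-cα)) * (m : ℝ≥0∞) :=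
                mul_le_mul_right hnorm _
            _ = ENNReal.ofReal (((1 : ℝ) - 3/4) ^ (-cα) * m) := by
                rw [ENNReal.ofReal_mul (by positivity), ENNReal.ofReal_natCast]
            _ ≤ ENNReal.ofReal (a / Γ) := by
                apply ENNReal.ofReal_le_ofReal
                have hΓcancel : a / Γ = 4 ^ cα * m + 1 := by
                  rw [ha]; field_simp
                rw [hΓcancel]
                have h14 : ((1 : ℝ) - 3/4) ^ (-cα) = (4 : ℝ) ^ cα := by
                  rw [show (1 : ℝ) - 3/4 = 4⁻¹ by norm_num,
                    Real.inv_rpow (by norm_num), Real.rpow_neg (by norm_num), inv_inv]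
                rw [h14]
                nlinarith [Real.rpow_pos_of_pos (by norm_num : (0:ℝ) < 4) cα]
      calc P (A m) ≤ _ := measure_mono hsub
        _ ≤ ENNReal.ofReal (Real.exp (-(Γ ^ δα / (1 : ℝ) ^ 2))) :=
            H (3/4) 1 (by norm_num) (by norm_num) le_rfl a hapos Γ (by rw [hΓ]; push_cast; linarith)
        _ = ENNReal.ofReal (Real.exp (-((Γα + 1 + j) ^ δα))) := by norm_num [hΓ]
    have htend : Tendsto (fun j : ℕ => ENNReal.ofReal (Real.exp (-((Γα + 1 + j) ^ δα))))
        atTop (𝓝 0) := by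
      have h1 : Tendsto (fun j : ℕ => (Γα + 1 + (j : ℝ))) atTop atTop :=
        tendsto_atTop_add_const_left _ _ tendsto_natCast_atTop_atTop
      have h2 : Tendsto (fun j : ℕ => ((Γα + 1 + (j : ℝ)) ^ δα)) atTop atTop :=
        (tendsto_rpow_atTop hδα).comp h1
      have h3 : Tendsto (fun j : ℕ => Real.exp (-((Γα + 1 + (j : ℝ)) ^ δα))) atTop (𝓝 0) :=
        Real.tendsto_exp_atBot.comp (tendsto_neg_atTop_atBot.comp h2)
      simpa using (ENNReal.tendsto_ofReal h3)
    have hle : P (A m) ≤ 0 := le_of_tendsto_of_tendsto' tendsto_const_nhds htend hbound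
    simpa using hle
  have hsubset : {ω | supNorm n (pCyl n (3/4 : ℝ) (1, 0)) (u ω) = ⊤} ⊆
      (⋃ m, A m) ∪ {ω | ¬ mixedNorm n p α (Set.Ioc (0 : ℝ) 1)
        (Metric.ball (0 : Fin n → ℝ) 1) (u ω) < ⊤} := by
    intro ω hω
    by_cases hfin' : mixedNorm n p α (Set.Ioc (0 : ℝ) 1) (Metric.ball (0 : Fin n → ℝ) 1) (u ω) < ⊤
    · left
      obtain ⟨m, hm⟩ := ENNReal.exists_nat_gt hfin'.ne
      exact Set.mem_iUnion.2 ⟨m, hω, hm.le⟩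
    · right; exact hfin'
  refine measure_mono_null hsubset (measure_union_null (measure_iUnion_null hAnull) ?_)
  rw [← ae_iff] at *
  exact hfin

/-- Exponent reduction in space. -/
theorem exponent_reduction_space
    {Ω : Type*} [MeasurableSpace Ω] (P : Measure Ω) [IsProbabilityMeasure P]
    (n : ℕ) (hn : 1 ≤ n) (p α β : ℝ) (hp : 0 < p) (hα : 0 < α)
    (hβ₁ : α / 2 < β) (hβ₂ : β < α)
    (u : Ω → ℝ × (Fin n → ℝ) → ℝ) (hu : Measurable (Function.uncurry u))
    (hfin : ∀ᵐ ω ∂P,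
      mixedNorm n p α (Set.Ioc (0 : ℝ) 1) (Metric.ball (0 : Fin n → ℝ) 1) (u ω) < ⊤)
    (δα Γα : ℝ) (hδα : 0 < δα) (hΓα : 1 ≤ Γα)
    (H : ∀ r R : ℝ, 0 < r → r < R → R ≤ 1 → ∀ a > (0 : ℝ), ∀ Γ > Γα,
      P {ω | supNorm n (pCyl n r (1, 0)) (u ω) > ENNReal.ofReal a ∧
          ENNReal.ofReal ((R - r) ^ (-((n : ℝ) / α + 2 / p))) *
            mixedNorm n p α (Set.Ioc (1 - R ^ 2) 1) (Metric.ball (0 : Fin n → ℝ) R) (u ω)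
            ≤ ENNReal.ofReal (a / Γ)} ≤
        ENNReal.ofReal (Real.exp (-(Γ ^ δα / R ^ 2)))) :
    ∃ δβ > (0 : ℝ), ∃ Γβ ≥ (1 : ℝ), ∀ Γ > Γβ, ∀ a > (0 : ℝ), ∀ r : ℝ, 0 < r → r ≤ 1 / 2 →
      P {ω | supNorm n (pCyl n r (1, 0)) (u ω) > ENNReal.ofReal a ∧
          ENNReal.ofReal (r ^ (-((n : ℝ) / β + 2 / p))) *
            mixedNorm n p β (Set.Ioc (1 - (2 * r) ^ 2) 1)
              (Metric.ball (0 : Fin n → ℝ) (2 * r)) (u ω)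
            ≤ ENNReal.ofReal (a / Γ)} ≤
        ENNReal.ofReal (Real.exp (-(Γ ^ δβ / (4 * r ^ 2)))) := by
  have hβ0 : 0 < β := lt_trans (by positivity) hβ₁
  set cα : ℝ := (n : ℝ) / α + 2 / p with hcα
  set cβ : ℝ := (n : ℝ) / β + 2 / p with hcβdef
  set θ : ℝ := β / α with hθdef
  have hθ : 0 < θ := by positivity
  have hθ1 : θ < 1 := by rw [hθdef, div_lt_one hα]; exact hβ₂
  have hcα0 : 0 < cα := by positivity
  set M : ℝ := (2 : ℝ) ^ ((cα + 1) / θ) with hMdef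
  have hMpos : 0 < M := Real.rpow_pos_of_pos two_pos _
  have hM1 : 1 < M := by
    rw [hMdef]
    exact (Real.one_lt_rpow_iff_of_pos two_pos).2 (Or.inl ⟨one_lt_two, div_pos (by linarith) hθ⟩)
  set C2 : ℝ := (3 / 2 : ℝ) ^ (2 * (1 - θ) / p) with hC2def
  have hC2pos : 0 < C2 := Real.rpow_pos_of_pos (by norm_num) _
  have hC21 : 1 ≤ C2 := by
    rw [hC2def]
    calc (1 : ℝ) = 1 ^ (2 * (1 - θ) / p) := (Real.one_rpow _).symm
      _ ≤ (3 / 2 : ℝ) ^ (2 * (1 - θ) / p) :=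
        Real.rpow_le_rpow zero_le_one (by norm_num)
          (by apply div_nonneg _ hp.le; linarith)
  set C3 : ℝ := M ^ (1 - θ) * (4 : ℝ) ^ cα * C2 with hC3def
  have hC3pos : 0 < C3 := by positivity
  have hC31 : 1 ≤ C3 := by
    have h1 : (1 : ℝ) ≤ M ^ (1 - θ) := by
      calc (1 : ℝ) = 1 ^ (1 - θ) := (Real.one_rpow _).symm
        _ ≤ M ^ (1 - θ) := Real.rpow_le_rpow zero_le_one hM1.le (by linarith)
    have h2 : (1 : ℝ) ≤ (4 : ℝ) ^ cα := by
      calc (1 : ℝ) = 1 ^ cα := (Real.one_rpow _).symm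
        _ ≤ (4 : ℝ) ^ cα := Real.rpow_le_rpow zero_le_one (by norm_num) hcα0.le
    have h12 : (1:ℝ) ≤ M ^ (1 - θ) * 4 ^ cα := by nlinarith
    rw [hC3def]
    nlinarith
  set c : ℝ := (2 : ℝ) ^ δα - 1 with hcdef
  have hcpos : 0 < c := by
    rw [hcdef, sub_pos]
    calc (1 : ℝ) = 2 ^ (0 : ℝ) := (Real.rpow_zero 2).symm
      _ < 2 ^ δα := Real.rpow_lt_rpow_left_iff one_lt_two |>.2 hδα
  set K : ℝ := C3 ^ δα with hKdef
  have hKpos : 0 < K := by positivity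
  have hK1 : 1 ≤ K := by
    calc (1 : ℝ) = 1 ^ δα := (Real.one_rpow _).symm
      _ ≤ C3 ^ δα := Real.rpow_le_rpow zero_le_one hC31 hδα.le
  set δβ : ℝ := θ * δα / 2 with hδβdef
  have hδβ : 0 < δβ := by positivity
  set X : ℝ := 2 * K + Real.log 2 + Real.log 2 / c + 1 with hXdef
  have hlog2 : (0:ℝ) ≤ Real.log 2 := Real.log_nonneg one_le_two
  have hX1 : 1 ≤ X := by
    have h3 : (0:ℝ) ≤ Real.log 2 / c := by positivity
    rw [hXdef]
    nlinarith
  set Γβ : ℝ := max ((C3 * Γα + 1) ^ (1 / θ)) (X ^ (1 / δβ)) with hΓβdef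
  have hΓβ1 : 1 ≤ Γβ := by
    refine le_trans ?_ (le_max_right _ _)
    calc (1 : ℝ) = 1 ^ (1 / δβ) := (Real.one_rpow _).symm
      _ ≤ X ^ (1 / δβ) := Real.rpow_le_rpow zero_le_one hX1 (by positivity)
  refine ⟨δβ, hδβ, Γβ, hΓβ1, ?_⟩
  intro Γ hΓ a ha r hr hr2
  have hΓ1 : 1 < Γ := lt_of_le_of_lt hΓβ1 hΓ
  have hΓpos : 0 < Γ := lt_trans one_pos hΓ1
  have hC1 : C3 * Γα < Γ ^ θ := by
    have h1 : (C3 * Γα + 1) ^ (1 / θ) < Γ := lt_of_le_of_lt (le_max_left _ _) hΓ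
    have h2 : ((C3 * Γα + 1) ^ (1 / θ)) ^ θ < Γ ^ θ :=
      Real.rpow_lt_rpow (Real.rpow_nonneg (by positivity) _) h1 hθ
    rw [← Real.rpow_mul (by positivity), one_div, inv_mul_cancel₀ hθ.ne', Real.rpow_one] at h2
    linarith
  set T : ℝ := Γ ^ δβ with hTdef
  have hTpos : 0 < T := Real.rpow_pos_of_pos hΓpos _
  have hXT : X < T := by
    have h1 : X ^ (1 / δβ) < Γ := lt_of_le_of_lt (le_max_right _ _) hΓ
    have h2 : (X ^ (1 / δβ)) ^ δβ < Γ ^ δβ :=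
      Real.rpow_lt_rpow (Real.rpow_nonneg (by linarith) _) h1 hδβ
    rwa [← Real.rpow_mul (by linarith), one_div, inv_mul_cancel₀ hδβ.ne', Real.rpow_one] at h2
  set G : ℝ := (Γ ^ θ / C3) ^ δα with hGdef
  have hGpos : 0 < G := Real.rpow_pos_of_pos (by positivity) _
  have hGT : G = T ^ 2 / K := by
    rw [hGdef, hKdef, Real.div_rpow (Real.rpow_nonneg hΓpos.le _) hC3pos.le]
    congr 1
    rw [hTdef, ← Real.rpow_natCast (Γ ^ δβ) 2, ← Real.rpow_mul hΓpos.le,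
      ← Real.rpow_mul hΓpos.le]
    congr 1
    rw [hδβdef]
    ring
  -- the chain of radii
  set ρ : ℕ → ℝ := fun k => r * (3 - (1 / 2 : ℝ) ^ k) / 2 with hρdef
  have hρeq : ∀ k : ℕ, ρ k = r * (3 - (1 / 2 : ℝ) ^ k) / 2 := fun k => rfl
  have hhalf : ∀ k : ℕ, (0:ℝ) < (1 / 2 : ℝ) ^ k ∧ ((1 / 2 : ℝ) ^ k : ℝ) ≤ 1 := fun k =>
    ⟨pow_pos (by norm_num) k, pow_le_one₀ (by norm_num) (by norm_num)⟩
  have hρpos : ∀ k, 0 < ρ k := by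
    intro k
    rw [hρeq k]
    have h1 := (hhalf k).2
    exact div_pos (mul_pos hr (by linarith)) two_pos
  have hρ0 : ρ 0 = r := by rw [hρeq 0]; norm_num
  have hρlt : ∀ k, ρ k < ρ (k + 1) := by
    intro k
    rw [hρeq k, hρeq (k + 1)]
    have h1 : ((1 / 2 : ℝ)) ^ (k + 1) < (1 / 2 : ℝ) ^ k :=
      pow_lt_pow_right_of_lt_one₀ (by norm_num) (by norm_num) (Nat.lt_succ_self k)
    have h2 : r * (3 - (1/2:ℝ)^k) < r * (3 - (1/2:ℝ)^(k+1)) :=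
      mul_lt_mul_of_pos_left (by linarith) hr
    linarith
  have hρle : ∀ k, ρ k ≤ 3 * r / 2 := by
    intro k
    rw [hρeq k]
    have h1 := (hhalf k).1
    have h2 : r * (3 - (1/2:ℝ)^k) ≤ 3 * r := by
      have := mul_le_mul_of_nonneg_left (by linarith : (3 - (1/2:ℝ)^k) ≤ 3) hr.le
      linarith
    linarith
  have hρ34 : ∀ k, ρ k ≤ 3 / 4 := fun k => le_trans (hρle k) (by linarith)
  have hgap : ∀ k : ℕ, ρ (k + 1) - ρ k = r * (1 / 2 : ℝ) ^ (k + 2) := by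
    intro k
    rw [hρeq (k + 1), hρeq k, pow_succ, pow_succ]
    ring
  -- the events
  set Γ' : ℕ → ℝ := fun k => Γ ^ θ * 2 ^ k / C3 with hΓ'def
  have hΓ'eq : ∀ k : ℕ, Γ' k = Γ ^ θ * 2 ^ k / C3 := fun k => rfl
  have hΓθpos : (0:ℝ) < Γ ^ θ := Real.rpow_pos_of_pos hΓpos _
  have hΓ'pos : ∀ k, 0 < Γ' k := by
    intro k
    rw [hΓ'eq k]
    positivity
  have hΓ'Γα : ∀ k, Γα < Γ' k := by
    intro k
    rw [hΓ'eq k, lt_div_iff₀ hC3pos]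
    have h2k : (1:ℝ) ≤ 2 ^ k := one_le_pow₀ (by norm_num)
    have h3 : Γ ^ θ ≤ Γ ^ θ * 2 ^ k := le_mul_of_one_le_right hΓθpos.le h2k
    have h4 : Γα * C3 = C3 * Γα := mul_comm _ _
    linarith
  set E : ℕ → Set Ω := fun k =>
    {ω | supNorm n (pCyl n (ρ k) (1, 0)) (u ω) > ENNReal.ofReal (M ^ k * a) ∧
      supNorm n (pCyl n (ρ (k + 1)) (1, 0)) (u ω) ≤ ENNReal.ofReal (M ^ (k + 1) * a) ∧
      ENNReal.ofReal (r ^ (-cβ)) *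
        mixedNorm n p β (Set.Ioc (1 - (2 * r) ^ 2) 1)
          (Metric.ball (0 : Fin n → ℝ) (2 * r)) (u ω) ≤ ENNReal.ofReal (a / Γ)} with hEdef
  have hEeq : ∀ (k : ℕ) (ω : Ω), ω ∈ E k ↔
      (supNorm n (pCyl n (ρ k) (1, 0)) (u ω) > ENNReal.ofReal (M ^ k * a) ∧
      supNorm n (pCyl n (ρ (k + 1)) (1, 0)) (u ω) ≤ ENNReal.ofReal (M ^ (k + 1) * a) ∧
      ENNReal.ofReal (r ^ (-cβ)) *
        mixedNorm n p β (Set.Ioc (1 - (2 * r) ^ 2) 1)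
          (Metric.ball (0 : Fin n → ℝ) (2 * r)) (u ω) ≤ ENNReal.ofReal (a / Γ)) :=
    fun k ω => Iff.rfl
  -- inclusion of the bad event into the union
  have hmain : {ω | supNorm n (pCyl n r (1, 0)) (u ω) > ENNReal.ofReal a ∧
      ENNReal.ofReal (r ^ (-cβ)) *
        mixedNorm n p β (Set.Ioc (1 - (2 * r) ^ 2) 1)
          (Metric.ball (0 : Fin n → ℝ) (2 * r)) (u ω) ≤ ENNReal.ofReal (a / Γ)} ⊆
      (⋃ k, E k) ∪ {ω | supNorm n (pCyl n (3/4 : ℝ) (1, 0)) (u ω) = ⊤} := by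
    rintro ω ⟨h1, h2⟩
    by_cases htop : supNorm n (pCyl n (3/4 : ℝ) (1, 0)) (u ω) = ⊤
    · exact Or.inr htop
    left
    have hmono : ∀ k, supNorm n (pCyl n (ρ k) (1, 0)) (u ω) ≤
        supNorm n (pCyl n (3/4 : ℝ) (1, 0)) (u ω) :=
      fun k => supNorm_mono_set (pCyl_mono (hρpos k).le (hρ34 k) _) _
    obtain ⟨m, hm⟩ := ENNReal.exists_nat_gt htop
    have hexists : ∃ k, supNorm n (pCyl n (ρ (k + 1)) (1, 0)) (u ω) ≤
        ENNReal.ofReal (M ^ (k + 1) * a) := by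
      by_contra hcon
      push_neg at hcon
      obtain ⟨k, hk⟩ := pow_unbounded_of_one_lt ((m : ℝ) / a) hM1
      have hma : (m : ℝ) < M ^ (k + 1) * a := by
        rw [div_lt_iff₀ ha] at hk
        have h4 : M ^ k ≤ M ^ (k + 1) := pow_le_pow_right₀ hM1.le (Nat.le_succ k)
        calc (m : ℝ) < M ^ k * a := hk
          _ ≤ M ^ (k + 1) * a := mul_le_mul_of_nonneg_right h4 ha.le
      have hchain : ENNReal.ofReal (M ^ (k + 1) * a) < (m : ℝ≥0∞) :=
        lt_of_lt_of_le (hcon k) (le_trans (hmono (k + 1)) hm.le)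
      rw [← ENNReal.ofReal_natCast m] at hchain
      have := (ENNReal.ofReal_lt_ofReal_iff_of_nonneg (by positivity)).1 hchain
      linarith
    have hind : ∀ j, j ≤ Nat.find hexists → ENNReal.ofReal (M ^ j * a) <
        supNorm n (pCyl n (ρ j) (1, 0)) (u ω) := by
      intro j
      induction j with
      | zero => intro _; rw [pow_zero, one_mul, hρ0]; exact h1
      | succ i _ =>
        intro hik
        exact lt_of_not_ge (Nat.find_min hexists (Nat.lt_of_succ_le hik))
    exact Set.mem_iUnion.2 ⟨Nat.find hexists,
      (hEeq _ ω).2 ⟨hind _ le_rfl, Nat.find_spec hexists, h2⟩⟩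
  -- per-event probability bound
  have hmeasuω : ∀ ω, Measurable (u ω) := fun ω => hu.comp measurable_prodMk_left
  have hρ1 : ∀ k : ℕ, ρ (k + 1) ≤ 1 := fun k => le_trans (hρ34 (k + 1)) (by norm_num)
  have hMk_pos : ∀ k : ℕ, (0:ℝ) < M ^ k * a := fun k => mul_pos (pow_pos hMpos k) ha
  have h1θ : (0:ℝ) ≤ 1 - θ := by linarith
  have hEk : ∀ k : ℕ, P (E k) ≤
      ENNReal.ofReal (Real.exp (-(Γ' k ^ δα / (ρ (k + 1)) ^ 2))) := by
    intro k
    refine le_trans (measure_mono ?_) (H (ρ k) (ρ (k + 1)) (hρpos k) (hρlt k) (hρ1 k)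
      (M ^ k * a) (hMk_pos k) (Γ' k) (hΓ'Γα k))
    intro ω hω
    obtain ⟨hs1, hs2, hs3⟩ := (hEeq k ω).1 hω
    refine ⟨hs1, ?_⟩
    have hρk1 : 0 < ρ (k + 1) := hρpos (k + 1)
    have hρk2r : ρ (k + 1) ≤ 2 * r := le_trans (hρle _) (by linarith)
    -- (a) β-norm over Q_{2r}, clean form
    have hNβ : mixedNorm n p β (Set.Ioc (1 - (2*r)^2) 1)
        (Metric.ball (0 : Fin n → ℝ) (2*r)) (u ω) ≤ ENNReal.ofReal (a * r ^ cβ / Γ) := by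
      have h1 := mul_le_mul_right hs3 (ENNReal.ofReal (r ^ cβ))
      rw [← mul_assoc, ← ENNReal.ofReal_mul (by positivity), ← Real.rpow_add hr,
        add_neg_cancel, Real.rpow_zero, ENNReal.ofReal_one, one_mul,
        ← ENNReal.ofReal_mul (by positivity)] at h1
      exact le_trans h1 (ENNReal.ofReal_le_ofReal (le_of_eq (by ring)))
    -- (b) monotonicity to the smaller cylinder
    have hNβ2 : mixedNorm n p β (Set.Ioc (1 - (ρ (k + 1))^2) 1)
        (Metric.ball (0 : Fin n → ℝ) (ρ (k + 1))) (u ω)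
        ≤ ENNReal.ofReal (a * r ^ cβ / Γ) := by
      refine le_trans (mixedNorm_mono_set hp hβ0 ?_ ?_ _) hNβ
      · refine Set.Ioc_subset_Ioc ?_ le_rfl
        have h5 : (ρ (k + 1))^2 ≤ (2*r)^2 := pow_le_pow_left₀ hρk1.le hρk2r 2
        linarith
      · exact Metric.ball_subset_ball hρk2r
    -- (c) interpolation and combination
    have hint := interp (n := n) hp hβ0 hβ₂ (hmeasuω ω) hρk1
    have hcomb : mixedNorm n p α (Set.Ioc (1 - (ρ (k + 1))^2) 1)
        (Metric.ball (0 : Fin n → ℝ) (ρ (k + 1))) (u ω) ≤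
        ENNReal.ofReal ((M^(k+1)*a) ^ (1 - θ) * (((ρ (k+1))^2) ^ ((1 - θ)/p) *
          (a * r ^ cβ / Γ) ^ θ)) := by
      refine le_trans hint ?_
      have hb1 : supNorm n (pCyl n (ρ (k + 1)) (1, 0)) (u ω) ^ (1 - θ) ≤
          ENNReal.ofReal (M^(k+1)*a) ^ (1 - θ) := ENNReal.rpow_le_rpow hs2 h1θ
      have hb3 : mixedNorm n p β (Set.Ioc (1 - (ρ (k + 1))^2) 1)
          (Metric.ball (0 : Fin n → ℝ) (ρ (k + 1))) (u ω) ^ θ ≤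
          ENNReal.ofReal (a * r ^ cβ / Γ) ^ θ := ENNReal.rpow_le_rpow hNβ2 hθ.le
      calc supNorm n (pCyl n (ρ (k + 1)) (1, 0)) (u ω) ^ (1 - θ) *
            ENNReal.ofReal ((ρ (k+1))^2) ^ ((1 - θ)/p) *
            mixedNorm n p β (Set.Ioc (1 - (ρ (k + 1))^2) 1)
              (Metric.ball (0 : Fin n → ℝ) (ρ (k + 1))) (u ω) ^ θ
          ≤ ENNReal.ofReal (M^(k+1)*a) ^ (1 - θ) *
            ENNReal.ofReal ((ρ (k+1))^2) ^ ((1 - θ)/p) *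
            ENNReal.ofReal (a * r ^ cβ / Γ) ^ θ :=
            mul_le_mul' (mul_le_mul' hb1 le_rfl) hb3
        _ = ENNReal.ofReal ((M^(k+1)*a) ^ (1 - θ) * (((ρ (k+1))^2) ^ ((1 - θ)/p) *
            (a * r ^ cβ / Γ) ^ θ)) := by
            rw [ENNReal.ofReal_rpow_of_nonneg (by positivity) h1θ,
              ENNReal.ofReal_rpow_of_nonneg (by positivity) (div_nonneg h1θ hp.le),
              ENNReal.ofReal_rpow_of_nonneg (by positivity) hθ.le,
              ← ENNReal.ofReal_mul (by positivity), ← ENNReal.ofReal_mul (by positivity)]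
            ring_nf
    -- (d) the key real computation
    have hREALEQ : (r * (1/2:ℝ)^(k+2)) ^ (-cα) * ((M^(k+1)*a) ^ (1 - θ) *
        ((((3*r/2):ℝ)^2) ^ ((1 - θ)/p) * (a * r ^ cβ / Γ) ^ θ)) = M^k*a / Γ' k := by
      have hexp_rpow : ∀ x y : ℝ, (Real.exp x) ^ y = Real.exp (x * y) := fun x y => by
        rw [Real.rpow_def_of_pos (Real.exp_pos x), Real.log_exp]
      have h2exp : (2:ℝ) ^ k = Real.exp (k * Real.log 2) := by
        rw [Real.exp_nat_mul, Real.exp_log two_pos]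
      have h12exp : ((1:ℝ)/2) ^ (k+2) = Real.exp (-(Real.log 2) * ((k:ℝ)+2)) := by
        rw [show ((1:ℝ)/2) = Real.exp (-(Real.log 2)) by
            rw [Real.exp_neg, Real.exp_log two_pos]; norm_num,
          show (-(Real.log 2) * ((k:ℝ)+2)) = ((k+2 : ℕ) : ℝ) * (-(Real.log 2)) by
            push_cast; ring,
          Real.exp_nat_mul]
      have hMexp : M = Real.exp ((cα+1)/θ * Real.log 2) := by
        rw [hMdef, Real.rpow_def_of_pos two_pos, mul_comm]
      have hC2exp : C2 = Real.exp (2*(1-θ)/p * Real.log (3/2)) := by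
        rw [hC2def, Real.rpow_def_of_pos (by norm_num), mul_comm]
      have h4exp : (4:ℝ) ^ cα = Real.exp (cα * (2 * Real.log 2)) := by
        rw [Real.rpow_def_of_pos (by norm_num)]
        congr 1
        rw [show (4:ℝ) = 2*2 by norm_num, Real.log_mul two_ne_zero two_ne_zero]
        ring
      have h32exp : ((3:ℝ)/2)^(2:ℕ) = Real.exp (Real.log (3/2) * 2) := by
        rw [show (Real.log (3/2) * 2) = ((2:ℕ):ℝ) * Real.log (3/2) by push_cast; ring,
          Real.exp_nat_mul, Real.exp_log (by norm_num : (0:ℝ) < 3/2)]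
      rw [hΓ'eq k, hC3def, hC2exp, hMexp, h4exp, h2exp, h12exp,
        show ((3*r/2 : ℝ))^2 = ((3:ℝ)/2)^(2:ℕ) * r^(2:ℕ) by ring, h32exp,
        show r = Real.exp (Real.log r) from (Real.exp_log hr).symm,
        show a = Real.exp (Real.log a) from (Real.exp_log ha).symm,
        show Γ = Real.exp (Real.log Γ) from (Real.exp_log hΓpos).symm]
      simp only [hexp_rpow, ← Real.exp_nat_mul, ← Real.exp_add, ← Real.exp_sub]
      rw [Real.exp_eq_exp]
      rw [hcα, hcβdef, hθdef]
      field_simp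
      push_cast
      ring
    -- (e) conclude the α-bound
    calc ENNReal.ofReal ((ρ (k+1) - ρ k) ^ (-cα)) *
          mixedNorm n p α (Set.Ioc (1 - (ρ (k+1))^2) 1)
            (Metric.ball (0 : Fin n → ℝ) (ρ (k+1))) (u ω)
        ≤ ENNReal.ofReal ((ρ (k+1) - ρ k) ^ (-cα)) *
            ENNReal.ofReal ((M^(k+1)*a) ^ (1-θ) * (((ρ (k+1))^2) ^ ((1-θ)/p) *
              (a * r ^ cβ / Γ) ^ θ)) := mul_le_mul_right hcomb _
      _ = ENNReal.ofReal ((ρ (k+1) - ρ k) ^ (-cα) * ((M^(k+1)*a) ^ (1-θ) *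
            (((ρ (k+1))^2) ^ ((1-θ)/p) * (a * r ^ cβ / Γ) ^ θ))) :=
          (ENNReal.ofReal_mul (Real.rpow_nonneg (by linarith [hρlt k]) _)).symm
      _ ≤ ENNReal.ofReal (M^k*a / Γ' k) := by
          apply ENNReal.ofReal_le_ofReal
          rw [← hREALEQ, hgap k]
          have hmono2 : (((ρ (k+1))^2):ℝ) ^ ((1-θ)/p) ≤ ((((3*r/2):ℝ)^2)) ^ ((1-θ)/p) := by
            apply Real.rpow_le_rpow (by positivity) ?_ (div_nonneg h1θ hp.le)
            have h7 := pow_le_pow_left₀ (hρpos (k+1)).le (hρle (k+1)) 2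
            linarith
          have g0 : (0:ℝ) ≤ (r * (1/2:ℝ)^(k+2)) ^ (-cα) := by positivity
          have w1 : (0:ℝ) ≤ (M^(k+1)*a) ^ (1-θ) := by positivity
          have w3 : (0:ℝ) ≤ (a * r ^ cβ / Γ) ^ θ := by positivity
          exact mul_le_mul_of_nonneg_left
            (mul_le_mul_of_nonneg_left (mul_le_mul_of_nonneg_right hmono2 w3) w1) g0
  -- summation over the events
  have h4r2 : (0:ℝ) < 4 * r^2 := by positivity
  have h4r2le1 : 4 * r^2 ≤ 1 := by
    have h9 : r^2 ≤ (1/2:ℝ)^2 := pow_le_pow_left₀ hr.le hr2 2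
    norm_num at h9
    linarith
  have hlog2c : (0:ℝ) ≤ Real.log 2 / c := by positivity
  have hXT' : 2 * K + Real.log 2 + Real.log 2 / c + 1 < T := by
    rw [hXdef] at hXT; exact hXT
  have hT2K : 2*K ≤ T := by linarith
  have hTK : K ≤ T := by linarith
  have hTlog : Real.log 2 ≤ T := by linarith
  have hTlogc : Real.log 2 / c ≤ T := by linarith
  have hGgeT : T ≤ G := by
    rw [hGT, le_div_iff₀ hKpos]
    calc T * K ≤ T * T := mul_le_mul_of_nonneg_left hTK hTpos.le
      _ = T ^ 2 := (sq T).symm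
  have hTc : Real.log 2 ≤ T * c := by
    calc Real.log 2 = (Real.log 2 / c) * c := by field_simp
      _ ≤ T * c := mul_le_mul_of_nonneg_right hTlogc hcpos.le
  have hGc : Real.log 2 ≤ G * c := le_trans hTc (mul_le_mul_of_nonneg_right hGgeT hcpos.le)
  have hΓ'exp : ∀ k : ℕ, Γ' k ^ δα = G * (1+c)^k := by
    intro k
    rw [hΓ'eq k, show Γ ^ θ * 2^k / C3 = (Γ ^ θ / C3) * 2^k by ring,
      Real.mul_rpow (by positivity) (by positivity), ← hGdef,
      show ((1:ℝ)+c) = 2 ^ δα by rw [hcdef]; ring]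
    congr 1
    rw [← Real.rpow_natCast (2:ℝ) k, ← Real.rpow_natCast ((2:ℝ) ^ δα) k,
      ← Real.rpow_mul (by norm_num), ← Real.rpow_mul (by norm_num)]
    ring_nf
  have hterm : ∀ k : ℕ, ENNReal.ofReal (Real.exp (-(Γ' k ^ δα / (ρ (k+1))^2))) ≤
      ENNReal.ofReal (Real.exp (-(G/(4*r^2)))) *
        ENNReal.ofReal (Real.exp (-(G*c/(4*r^2)))) ^ k := by
    intro k
    rw [← ENNReal.ofReal_pow (by positivity), ← ENNReal.ofReal_mul (by positivity),
      ← Real.exp_nat_mul, ← Real.exp_add]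
    apply ENNReal.ofReal_le_ofReal
    apply Real.exp_le_exp.2
    have hb : (1:ℝ) + (k:ℝ) * c ≤ (1+c)^k := one_add_mul_le_pow (by linarith) k
    have hρsq : (ρ (k+1))^2 ≤ 4*r^2 := by
      have h5 : ρ (k+1) ≤ 2*r := le_trans (hρle _) (by linarith)
      have h6 := pow_le_pow_left₀ (hρpos (k+1)).le h5 2
      calc (ρ (k+1))^2 ≤ (2*r)^2 := h6
        _ = 4*r^2 := by ring
    have h1' : G * (1+(k:ℝ)*c) / (4*r^2) ≤ G * (1+c)^k / (4*r^2) := by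
      apply div_le_div_of_nonneg_right ?_ h4r2.le
      exact mul_le_mul_of_nonneg_left hb hGpos.le
    have h2' : G * (1+c)^k / (4*r^2) ≤ G * (1+c)^k / (ρ (k+1))^2 :=
      div_le_div_of_nonneg_left (by positivity) (pow_pos (hρpos (k+1)) 2) hρsq
    have heq : -(G/(4*r^2)) + (k:ℝ) * -(G*c/(4*r^2)) = -(G*(1+(k:ℝ)*c)/(4*r^2)) := by
      field_simp
      ring
    rw [hΓ'exp k]
    linarith
  have hsum : ∑' k, P (E k) ≤ ENNReal.ofReal (2 * Real.exp (-(G/(4*r^2)))) := by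
    calc ∑' k, P (E k) ≤ ∑' k : ℕ, ENNReal.ofReal (Real.exp (-(G/(4*r^2)))) *
          ENNReal.ofReal (Real.exp (-(G*c/(4*r^2)))) ^ k :=
        ENNReal.tsum_le_tsum (fun k => le_trans (hEk k) (hterm k))
      _ = ENNReal.ofReal (Real.exp (-(G/(4*r^2)))) *
          (1 - ENNReal.ofReal (Real.exp (-(G*c/(4*r^2)))))⁻¹ := by
        rw [ENNReal.tsum_mul_left, ENNReal.tsum_geometric]
      _ ≤ ENNReal.ofReal (Real.exp (-(G/(4*r^2)))) * 2 := by
        apply mul_le_mul_right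
        have hGc2 : Real.log 2 ≤ G*c/(4*r^2) := by
          calc Real.log 2 ≤ G * c := hGc
            _ = (G*c)/1 := by ring
            _ ≤ G*c/(4*r^2) := div_le_div_of_nonneg_left (by positivity) h4r2 h4r2le1
        have hexphalf : Real.exp (-(G*c/(4*r^2))) ≤ 1/2 := by
          rw [show (1:ℝ)/2 = Real.exp (-(Real.log 2)) by
            rw [Real.exp_neg, Real.exp_log two_pos]; norm_num]
          exact Real.exp_le_exp.2 (by linarith)
        have hq : ENNReal.ofReal (Real.exp (-(G*c/(4*r^2)))) ≤ 2⁻¹ := by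
          calc ENNReal.ofReal (Real.exp (-(G*c/(4*r^2)))) ≤ ENNReal.ofReal (1/2) :=
              ENNReal.ofReal_le_ofReal hexphalf
            _ = 2⁻¹ := by
              rw [one_div, ENNReal.ofReal_inv_of_pos two_pos, ENNReal.ofReal_ofNat]
        have hhalf1 : (1:ℝ≥0∞) - 2⁻¹ = 2⁻¹ := by
          rw [← ENNReal.inv_two_add_inv_two]
          exact ENNReal.add_sub_cancel_right (by norm_num)
        have h1q : (2⁻¹ : ℝ≥0∞) ≤ 1 - ENNReal.ofReal (Real.exp (-(G*c/(4*r^2)))) := by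
          have h8 := tsub_le_tsub_left hq (1:ℝ≥0∞)
          rwa [hhalf1] at h8
        calc (1 - ENNReal.ofReal (Real.exp (-(G*c/(4*r^2)))))⁻¹ ≤ (2⁻¹:ℝ≥0∞)⁻¹ :=
            ENNReal.inv_le_inv' h1q
          _ = 2 := by rw [inv_inv]
      _ = ENNReal.ofReal (2 * Real.exp (-(G/(4*r^2)))) := by
        rw [ENNReal.ofReal_mul (by norm_num), ENNReal.ofReal_ofNat, mul_comm]
  have hfinal : 2 * Real.exp (-(G/(4*r^2))) ≤ Real.exp (-(T/(4*r^2))) := by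
    rw [show (2:ℝ) = Real.exp (Real.log 2) from (Real.exp_log two_pos).symm, ← Real.exp_add]
    apply Real.exp_le_exp.2
    have h2T : 2*T ≤ G := by
      rw [hGT, le_div_iff₀ hKpos]
      calc 2*T*K = T*(2*K) := by ring
        _ ≤ T*T := mul_le_mul_of_nonneg_left hT2K hTpos.le
        _ = T^2 := (sq T).symm
    have hGTd : T + Real.log 2 ≤ G := by linarith
    have hdiv : (T + Real.log 2)/(4*r^2) ≤ G/(4*r^2) :=
      div_le_div_of_nonneg_right hGTd h4r2.le
    have hdiv2 : Real.log 2 ≤ Real.log 2 / (4*r^2) := by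
      calc Real.log 2 = Real.log 2 / 1 := by ring
        _ ≤ Real.log 2 / (4*r^2) := div_le_div_of_nonneg_left hlog2 h4r2 h4r2le1
    have hsplit : (T + Real.log 2)/(4*r^2) = T/(4*r^2) + Real.log 2/(4*r^2) := by ring
    linarith
  have hBadnull : P {ω | supNorm n (pCyl n (3/4 : ℝ) (1, 0)) (u ω) = ⊤} = 0 :=
    sup_ne_top P n p α hp hα u hfin δα Γα hδα hΓα H
  calc P {ω | supNorm n (pCyl n r (1, 0)) (u ω) > ENNReal.ofReal a ∧
        ENNReal.ofReal (r ^ (-cβ)) *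
          mixedNorm n p β (Set.Ioc (1 - (2 * r) ^ 2) 1)
            (Metric.ball (0 : Fin n → ℝ) (2 * r)) (u ω) ≤ ENNReal.ofReal (a / Γ)}
      ≤ P ((⋃ k, E k) ∪ {ω | supNorm n (pCyl n (3/4 : ℝ) (1, 0)) (u ω) = ⊤}) :=
        measure_mono hmain
    _ ≤ P (⋃ k, E k) + P {ω | supNorm n (pCyl n (3/4 : ℝ) (1, 0)) (u ω) = ⊤} :=
        measure_union_le _ _
    _ = P (⋃ k, E k) := by rw [hBadnull, add_zero]
    _ ≤ ∑' k, P (E k) := measure_iUnion_le _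
    _ ≤ ENNReal.ofReal (2 * Real.exp (-(G/(4*r^2)))) := hsum
    _ ≤ ENNReal.ofReal (Real.exp (-(T/(4*r^2)))) := ENNReal.ofReal_le_ofReal hfinal
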